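/- arXiv:2110.10503 — 6 statements merged into one kernel-verified Lean document; each statement's English description precedes it below -/
import Mathlib

section
/- The map Z^{-1} satisfies the integral identity Z^{-1}(s) = x₀ + ∫_0^s v(Z^{-1}(u)) du for all s ∈ ℝ. -/
open MeasureTheory intervalIntegral

/-- The inverse of the surrogate map `Z(x) = ∫_{x₀}^x 1/v` satisfies
`Z⁻¹(s) = x₀ + ∫_0^s v(Z⁻¹(u)) du` for all `s ∈ ℝ`. -/
theorem stmt4
    (v : ℝ → ℝ) (vlow C : ℝ) (hvlow : 0 < vlow)
    (hmeas : Measurable v)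
    (hbd : ∀ᵐ x : ℝ, vlow ≤ v x ∧ v x ≤ C)
    (x₀ : ℝ) (Z Zinv : ℝ → ℝ)
    (hZ : ∀ x, Z x = ∫ s in x₀..x, 1 / v s)
    (hbij : Function.Bijective Z)
    (hinv : Function.RightInverse Zinv Z ∧ Function.LeftInverse Zinv Z) :
    ∀ s : ℝ, Zinv s = x₀ + ∫ u in (0:ℝ)..s, v (Zinv u) := by
  obtain ⟨hri, hli⟩ := hinv
  obtain ⟨x', hx'⟩ := hbd.exists
  have hC : 0 < C := lt_of_lt_of_le hvlow (hx'.1.trans hx'.2)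
  -- integrability of 1/v on intervals
  have hint : ∀ a b : ℝ, IntervalIntegrable (fun s => 1 / v s) volume a b := by
    intro a b
    refine (_root_.intervalIntegrable_const (c := 1 / vlow)).mono_fun'
      ((measurable_const.div hmeas)).aestronglyMeasurable ?_
    filter_upwards [ae_restrict_of_ae hbd] with x hx
    have h0 : 0 < v x := lt_of_lt_of_le hvlow hx.1
    rw [Real.norm_eq_abs, abs_of_nonneg (by positivity)]
    exact one_div_le_one_div_of_le hvlow hx.1
  have hZdiff : ∀ a b : ℝ, Z b - Z a = ∫ s in a..b, 1 / v s := by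
    intro a b
    have h := intervalIntegral.integral_add_adjacent_intervals (hint x₀ a) (hint a b)
    rw [hZ a, hZ b]
    linarith
  have hZgap : ∀ a b : ℝ, a ≤ b → (b - a) / C ≤ Z b - Z a := by
    intro a b hab
    rw [hZdiff]
    have h1 : ∫ _ in a..b, (1 / C : ℝ) ≤ ∫ s in a..b, 1 / v s := by
      refine intervalIntegral.integral_mono_ae hab (intervalIntegrable_const) (hint a b) ?_
      filter_upwards [hbd] with x hx
      have h0 : 0 < v x := lt_of_lt_of_le hvlow hx.1
      exact one_div_le_one_div_of_le h0 hx.2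
    rw [intervalIntegral.integral_const, smul_eq_mul] at h1
    calc (b - a) / C = (b - a) * (1 / C) := by ring
    _ ≤ _ := h1
  have hZsm : StrictMono Z := by
    intro a b hab
    have h1 := hZgap a b hab.le
    have h2 : 0 < (b - a) / C := by
      have : 0 < b - a := by linarith
      positivity
    linarith
  have hZmeas : Measurable Z := hZsm.monotone.measurable
  have hZinvm : Monotone Zinv := by
    intro a b hab
    by_contra h
    push_neg at h
    have := hZsm h
    rw [hri a, hri b] at this
    linarith
  have hZinvmeas : Measurable Zinv := hZinvm.measurable
  have hZx0 : Z x₀ = 0 := by rw [hZ]; simp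
  have hZinv0 : Zinv 0 = x₀ := by rw [← hZx0]; exact hli x₀
  have hpre : ∀ a b : ℝ, Z ⁻¹' (Set.Ioc a b) = Set.Ioc (Zinv a) (Zinv b) := by
    intro a b
    ext x
    simp only [Set.mem_preimage, Set.mem_Ioc]
    constructor
    · rintro ⟨h1, h2⟩
      exact ⟨hZsm.lt_iff_lt.mp (by rwa [hri]), hZsm.le_iff_le.mp (by rwa [hri])⟩
    · rintro ⟨h1, h2⟩
      exact ⟨by rw [← hri a]; exact hZsm h1, by rw [← hri b]; exact hZsm.monotone h2⟩
  set f : ℝ → NNReal := fun x => Real.toNNReal (1 / v x) with hf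
  have hfmeas : Measurable f := (measurable_const.div hmeas).real_toNNReal
  set ν : Measure ℝ := volume.withDensity (fun x => (f x : ENNReal)) with hν
  have hνIoc : ∀ a b : ℝ, a ≤ b → ν (Set.Ioc a b) = ENNReal.ofReal (Z b - Z a) := by
    intro a b hab
    rw [hν, withDensity_apply _ measurableSet_Ioc]
    have : ∀ x, ((f x : NNReal) : ENNReal) = ENNReal.ofReal (1 / v x) := fun x => rfl
    simp_rw [this]
    rw [← MeasureTheory.ofReal_integral_eq_lintegral_ofReal]
    · congr 1
      rw [hZdiff a b, intervalIntegral.integral_of_le hab]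
    · exact (hint a b).1
    · filter_upwards [ae_restrict_of_ae hbd] with x hx
      have h0 : 0 < v x := lt_of_lt_of_le hvlow hx.1
      positivity
  have hmap : Measure.map Z ν = volume := by
    refine Measure.ext_of_Ioc' _ _ ?_ ?_ <;> intro a b hab <;>
      rw [Measure.map_apply hZmeas measurableSet_Ioc, hpre,
        hνIoc _ _ (hZinvm hab.le), hri, hri]
    · exact ENNReal.ofReal_ne_top
    · rw [Real.volume_Ioc]
  have key : ∀ a b : ℝ, a ≤ b → ∫ u in Set.Ioc a b, v (Zinv u) = Zinv b - Zinv a := by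
    intro a b hab
    have hgm : AEStronglyMeasurable (fun u => v (Zinv u)) (Measure.map Z ν) :=
      (hmeas.comp hZinvmeas).aestronglyMeasurable
    calc ∫ u in Set.Ioc a b, v (Zinv u)
        = ∫ u in Set.Ioc a b, v (Zinv u) ∂(Measure.map Z ν) := by rw [hmap]
      _ = ∫ x in Z ⁻¹' (Set.Ioc a b), v (Zinv (Z x)) ∂ν := by
          rw [MeasureTheory.setIntegral_map measurableSet_Ioc hgm hZmeas.aemeasurable]
      _ = ∫ x in Set.Ioc (Zinv a) (Zinv b), v x ∂ν := by
          rw [hpre]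
          refine integral_congr_ae (Filter.Eventually.of_forall fun x => show v (Zinv (Z x)) = v x by rw [hli])
      _ = ∫ x in Set.Ioc (Zinv a) (Zinv b), f x • v x := by
          rw [hν, restrict_withDensity measurableSet_Ioc,
            integral_withDensity_eq_integral_smul hfmeas]
      _ = ∫ x in Set.Ioc (Zinv a) (Zinv b), (1 : ℝ) := by
          refine integral_congr_ae ?_
          filter_upwards [ae_restrict_of_ae hbd] with x hx
          have h0 : 0 < v x := lt_of_lt_of_le hvlow hx.1
          rw [hf]
          simp only [NNReal.smul_def, Real.coe_toNNReal _ (by positivity : (0:ℝ) ≤ 1 / v x)]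
          rw [smul_eq_mul, one_div, inv_mul_cancel₀ h0.ne']
      _ = Zinv b - Zinv a := by
          rw [setIntegral_const, measureReal_def, Real.volume_Ioc, smul_eq_mul, mul_one,
            ENNReal.toReal_ofReal (sub_nonneg.mpr (hZinvm hab))]
  intro s
  rcases le_or_gt 0 s with hs | hs
  · rw [intervalIntegral.integral_of_le hs, key 0 s hs, hZinv0]; ring
  · rw [intervalIntegral.integral_of_ge hs.le, key s 0 hs.le, hZinv0]; ring
end

section
/- Stability of Z in data: for all x₀, x̃₀, u ∈ ℝ and all measurable v, ṽ bounded below by v̲ > 0, |Z[v](x₀; u) − Z[ṽ](x̃₀; u)| ≤ (1/v̲)|x₀ − x̃₀| + (1/v̲²) ‖v − ṽ‖_{L¹(I)}, where I = (min{x₀, x̃₀, u}, max{x₀, x̃₀, u}). -/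
open MeasureTheory intervalIntegral Set

/-- Stability of the surrogate map `Z[v](x₀; u) = ∫_{x₀}^u 1/v` in the data:
`|Z[v](x₀;u) − Z[ṽ](x̃₀;u)| ≤ (1/v̲)|x₀ − x̃₀| + (1/v̲²)‖v − ṽ‖_{L¹(I)}`,
`I = (min{x₀,x̃₀,u}, max{x₀,x̃₀,u})`. -/
theorem stmt6
    (vlow : ℝ) (hvlow : 0 < vlow)
    (v vt : ℝ → ℝ) (hmeas : Measurable v) (hmeast : Measurable vt)
    (hv : ∀ᵐ y : ℝ, vlow ≤ v y) (hvt : ∀ᵐ y : ℝ, vlow ≤ vt y)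
    (hvbd : ∃ C, ∀ᵐ y : ℝ, v y ≤ C) (hvtbd : ∃ C, ∀ᵐ y : ℝ, vt y ≤ C)
    (x₀ xt₀ u : ℝ) :
    |(∫ s in x₀..u, 1 / v s) - ∫ s in xt₀..u, 1 / vt s| ≤
      (1 / vlow) * |x₀ - xt₀| +
      (1 / vlow ^ 2) *
        ∫ s in Ioo (min x₀ (min xt₀ u)) (max x₀ (max xt₀ u)), |v s - vt s| := by
  obtain ⟨C, hC⟩ := hvbd
  obtain ⟨Ct, hCt⟩ := hvtbd
  set m := min x₀ (min xt₀ u) with hm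
  set M := max x₀ (max xt₀ u) with hM
  -- generic integrability from a.e. boundedness
  have key : ∀ (f : ℝ → ℝ) (c : ℝ), Measurable f → (∀ᵐ x : ℝ, ‖f x‖ ≤ c) →
      ∀ a b : ℝ, IntervalIntegrable f volume a b := by
    intro f c hmf hb a b
    rw [intervalIntegrable_iff]
    exact Integrable.mono' (integrableOn_const measure_Ioc_lt_top.ne)
      hmf.aestronglyMeasurable.restrict (ae_restrict_of_ae hb)
  have hvpos : ∀ᵐ x : ℝ, 0 < v x := hv.mono fun x hx => lt_of_lt_of_le hvlow hx
  have hvtpos : ∀ᵐ x : ℝ, 0 < vt x := hvt.mono fun x hx => lt_of_lt_of_le hvlow hx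
  have hb1 : ∀ᵐ x : ℝ, ‖1 / v x‖ ≤ 1 / vlow := by
    filter_upwards [hv] with x hx
    have hp : 0 < v x := lt_of_lt_of_le hvlow hx
    rw [Real.norm_eq_abs, abs_of_nonneg (by positivity)]
    exact one_div_le_one_div_of_le hvlow hx
  have hb1t : ∀ᵐ x : ℝ, ‖1 / vt x‖ ≤ 1 / vlow := by
    filter_upwards [hvt] with x hx
    have hp : 0 < vt x := lt_of_lt_of_le hvlow hx
    rw [Real.norm_eq_abs, abs_of_nonneg (by positivity)]
    exact one_div_le_one_div_of_le hvlow hx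
  have hint1 : ∀ a b : ℝ, IntervalIntegrable (fun s => 1 / v s) volume a b :=
    key _ _ (hmeas.const_div 1) hb1
  have hint2 : ∀ a b : ℝ, IntervalIntegrable (fun s => 1 / vt s) volume a b :=
    key _ _ (hmeast.const_div 1) hb1t
  set g : ℝ → ℝ := fun s => 1 / vlow ^ 2 * |v s - vt s| with hg
  have hgmeas : Measurable g := ((hmeas.sub hmeast).abs).const_mul _
  have hgbd : ∀ᵐ x : ℝ, ‖g x‖ ≤ 1 / vlow ^ 2 * (C + Ct) := by
    filter_upwards [hC, hCt, hvpos, hvtpos] with x h1 h2 h3 h4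
    rw [Real.norm_eq_abs, abs_of_nonneg (by positivity)]
    have : |v x - vt x| ≤ C + Ct :=
      (abs_sub _ _).trans (by rw [abs_of_pos h3, abs_of_pos h4]; linarith)
    have h5 : (0:ℝ) ≤ 1 / vlow ^ 2 := by positivity
    exact mul_le_mul_of_nonneg_left this h5
  have hgint : ∀ a b : ℝ, IntervalIntegrable g volume a b := key _ _ hgmeas hgbd
  -- pointwise bound for difference of reciprocals
  have hdiff : ∀ᵐ x : ℝ, ‖1 / v x - 1 / vt x‖ ≤ g x := by
    filter_upwards [hv, hvt] with x h1 h2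
    have h3 : 0 < v x := lt_of_lt_of_le hvlow h1
    have h4 : 0 < vt x := lt_of_lt_of_le hvlow h2
    rw [Real.norm_eq_abs, div_sub_div _ _ (ne_of_gt h3) (ne_of_gt h4), abs_div]
    rw [one_mul, mul_one, abs_of_pos (mul_pos h3 h4)]
    have hnum : |vt x - v x| = |v x - vt x| := abs_sub_comm _ _
    rw [hnum, hg]
    have hle : vlow ^ 2 ≤ v x * vt x := by nlinarith
    calc |v x - vt x| / (v x * vt x) ≤ |v x - vt x| / vlow ^ 2 :=
          div_le_div_of_nonneg_left (abs_nonneg _) (by positivity) hle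
      _ = 1 / vlow ^ 2 * |v x - vt x| := by ring
  -- splitting
  have hsplit : (∫ s in x₀..u, 1 / v s) - ∫ s in xt₀..u, 1 / vt s
      = (∫ s in x₀..xt₀, 1 / v s) + ∫ s in xt₀..u, (1 / v s - 1 / vt s) := by
    rw [intervalIntegral.integral_sub (hint1 _ _) (hint2 _ _),
      ← intervalIntegral.integral_add_adjacent_intervals (hint1 x₀ xt₀) (hint1 xt₀ u)]
    ring
  rw [hsplit]
  have t1 : |∫ s in x₀..xt₀, 1 / v s| ≤ 1 / vlow * |x₀ - xt₀| := by
    have := intervalIntegral.norm_integral_le_of_norm_le_const_ae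
      (a := x₀) (b := xt₀) (C := 1 / vlow) (f := fun s => 1 / v s)
      (hb1.mono fun x hx _ => hx)
    rwa [Real.norm_eq_abs, abs_sub_comm xt₀ x₀] at this
  have t2 : |∫ s in xt₀..u, (1 / v s - 1 / vt s)| ≤ 1 / vlow ^ 2 * ∫ s in Ioo m M, |v s - vt s| := by
    have step1 : ‖∫ s in xt₀..u, (1 / v s - 1 / vt s)‖ ≤ |∫ s in xt₀..u, g s| :=
      intervalIntegral.norm_integral_le_abs_of_norm_le (ae_restrict_of_ae hdiff) (hgint _ _)
    rw [Real.norm_eq_abs] at step1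
    refine step1.trans ?_
    have hgnn : ∀ x, 0 ≤ g x := fun x => by positivity
    rw [intervalIntegral.abs_integral_eq_abs_integral_uIoc,
      abs_of_nonneg (integral_nonneg hgnn)]
    have hsub : Set.uIoc xt₀ u ≤ᵐ[volume] Ioo m M := by
      rw [ae_le_set]
      refine measure_mono_null (fun x hx => ?_) (measure_singleton M)
      obtain ⟨h1, h2⟩ := hx
      rw [Set.uIoc] at h1
      obtain ⟨h1a, h1b⟩ := h1
      have hmx : m < x := lt_of_le_of_lt (by simp [hm, le_min_iff, min_le_iff]) h1a
      have hxM : x ≤ M := le_trans h1b (by simp [hM, le_max_iff, max_le_iff])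
      simp only [Set.mem_Ioo, not_and, not_lt] at h2
      exact Set.mem_singleton_iff.2 (le_antisymm hxM (h2 hmx))
    have hmono : (∫ x in Set.uIoc xt₀ u, g x) ≤ ∫ x in Ioo m M, g x := by
      refine setIntegral_mono_set ?_ (Filter.Eventually.of_forall hgnn) hsub
      exact Integrable.mono' (integrableOn_const measure_Ioo_lt_top.ne)
        hgmeas.aestronglyMeasurable.restrict (ae_restrict_of_ae hgbd)
    refine hmono.trans_eq ?_
    rw [hg]
    simp only [MeasureTheory.integral_const_mul]
  calc |(∫ s in x₀..xt₀, 1 / v s) + ∫ s in xt₀..u, (1 / v s - 1 / vt s)|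
      ≤ |∫ s in x₀..xt₀, 1 / v s| + |∫ s in xt₀..u, (1 / v s - 1 / vt s)| := abs_add_le _ _
    _ ≤ _ := add_le_add t1 t2
end

section
/- For smooth data, the derivative of the flow in the initial datum has the explicit formula ∂_{x₀} X(x₀; t) = (v(X(x₀;t)) / v(x₀)) · exp(∫_0^t ∂₂λ(s, X(x₀;s)) v(X(x₀;s)) ds) for all t ∈ [0,T]. -/
open MeasureTheory intervalIntegral Set

/-- For smooth data, the derivative of the flow with respect to the initial
datum is given explicitly by
`∂_{x₀} X(x₀;t) = (v(X(x₀;t))/v(x₀)) · exp(∫_0^t ∂₂λ(s, X(x₀;s)) v(X(x₀;s)) ds)`. -/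
theorem stmt8
    (T vlow Cv Clam CdL : ℝ) (hT : 0 < T) (hvlow : 0 < vlow)
    (v : ℝ → ℝ) (hvC1 : ContDiff ℝ 1 v)
    (hv : ∀ y, vlow ≤ v y ∧ v y ≤ Cv)
    (lam : ℝ → ℝ → ℝ) (hlamC1 : ContDiff ℝ 1 (fun p : ℝ × ℝ => lam p.1 p.2))
    (hlamBd : ∀ s a, |lam s a| ≤ Clam)
    (hdlamBd : ∀ s a, |deriv (lam s) a| ≤ CdL)
    (X : ℝ → ℝ → ℝ)
    (hX0 : ∀ x₀, X x₀ 0 = x₀)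
    (hXode : ∀ x₀, ∀ t ∈ Icc (0:ℝ) T,
      HasDerivAt (X x₀) (v (X x₀ t) * lam t (X x₀ t)) t) :
    ∀ x₀, ∀ t ∈ Icc (0:ℝ) T,
      HasDerivAt (fun y => X y t)
        (v (X x₀ t) / v x₀ *
          Real.exp (∫ s in (0:ℝ)..t, deriv (lam s) (X x₀ s) * v (X x₀ s))) x₀ := by
  -- the vector field and its space derivative
  set g : ℝ → ℝ → ℝ := fun s x => deriv v x * lam s x + deriv (lam s) x * v x with hg_def
  have hvpos : ∀ x, 0 < v x := fun x => lt_of_lt_of_le hvlow (hv x).1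
  have hd : ∀ s x, HasDerivAt (lam s) (fderiv ℝ (fun p : ℝ × ℝ => lam p.1 p.2) (s, x) (0, 1)) x := by
    intro s x
    have h1 : HasFDerivAt (fun p : ℝ × ℝ => lam p.1 p.2)
        (fderiv ℝ (fun p : ℝ × ℝ => lam p.1 p.2) (s, x)) (s, x) :=
      (hlamC1.differentiable one_ne_zero).differentiableAt.hasFDerivAt
    exact h1.comp_hasDerivAt x ((hasDerivAt_const x s).prodMk (hasDerivAt_id x))
  have hderiveq : ∀ s x, deriv (lam s) x = fderiv ℝ (fun p : ℝ × ℝ => lam p.1 p.2) (s, x) (0, 1) :=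
    fun s x => (hd s x).deriv
  have hgderiv : ∀ s x, HasDerivAt (fun x => v x * lam s x) (g s x) x := by
    intro s x
    have hv' : HasDerivAt v (deriv v x) x :=
      ((hvC1.differentiable one_ne_zero).differentiableAt).hasDerivAt
    have := hv'.mul ((hd s x).congr_deriv (hderiveq s x).symm)
    exact this.congr_deriv (by show _ = deriv v x * lam s x + deriv (lam s) x * v x; ring)
  have hdlcont : Continuous (fun p : ℝ × ℝ => deriv (lam p.1) p.2) := by
    have : Continuous (fun p : ℝ × ℝ => fderiv ℝ (fun p : ℝ × ℝ => lam p.1 p.2) p (0, 1)) :=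
      (hlamC1.continuous_fderiv one_ne_zero).clm_apply continuous_const
    exact this.congr fun p => (hderiveq p.1 p.2).symm
  have hdvcont : Continuous (deriv v) := hvC1.continuous_deriv le_rfl
  have hgcont : Continuous (fun p : ℝ × ℝ => g p.1 p.2) :=
    (((hdvcont.comp continuous_snd).mul hlamC1.continuous).add
      (hdlcont.mul (hvC1.continuous.comp continuous_snd)))
  intro x₀ t ht
  -- the clamped flow Y, continuous everywhere
  set cl : ℝ → ℝ := fun s => max 0 (min s T) with hcl_def
  have hclmem : ∀ s, cl s ∈ Icc (0:ℝ) T := by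
    intro s
    constructor
    · exact le_max_left _ _
    · exact max_le (le_of_lt hT) (min_le_right s T)
  have hclcont : Continuous cl := continuous_const.max (continuous_id.min continuous_const)
  have hcleq : ∀ s ∈ Icc (0:ℝ) T, cl s = s := by
    intro s hs; simp [hcl_def, min_eq_left hs.2, max_eq_right hs.1]
  set Y : ℝ → ℝ → ℝ := fun y s => X y (cl s) with hY_def
  have hXcontAt : ∀ y, ∀ s ∈ Icc (0:ℝ) T, ContinuousAt (X y) s :=
    fun y s hs => (hXode y s hs).continuousAt
  have hYcont : ∀ y, Continuous (Y y) := by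
    intro y
    rw [continuous_iff_continuousAt]
    exact fun s => (hXcontAt y (cl s) (hclmem s)).comp hclcont.continuousAt
  have hYeq : ∀ y, ∀ s ∈ Icc (0:ℝ) T, Y y s = X y s := by
    intro y s hs; simp [hY_def, hcleq s hs]
  have hXcontOn : ∀ y, ContinuousOn (X y) (Icc 0 T) := by
    intro y
    exact ContinuousOn.congr (hYcont y).continuousOn (fun s hs => (hYeq y s hs).symm)
  -- a priori bound on the trajectories
  have hM0 : (0:ℝ) ≤ Cv * Clam := by
    have h1 : (0:ℝ) ≤ Cv := le_trans (le_of_lt hvlow) (le_trans (hv 0).1 (hv 0).2)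
    have h2 : (0:ℝ) ≤ Clam := le_trans (abs_nonneg _) (hlamBd 0 0)
    exact mul_nonneg h1 h2
  have hYbd : ∀ y s, |Y y s - y| ≤ Cv * Clam * T := by
    intro y s
    have := Convex.norm_image_sub_le_of_norm_hasDerivWithin_le
      (f := X y) (f' := fun u => v (X y u) * lam u (X y u)) (C := Cv * Clam)
      (fun u hu => (hXode y u hu).hasDerivWithinAt)
      (fun u hu => by
        rw [Real.norm_eq_abs, abs_mul]
        exact mul_le_mul (abs_le.mpr ⟨by linarith [hvpos (X y u), (hv (X y u)).2], (hv (X y u)).2⟩)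
          (hlamBd u (X y u)) (abs_nonneg _) (le_trans (le_of_lt hvlow) (le_trans (hv 0).1 (hv 0).2)))
      (convex_Icc 0 T) (by exact ⟨le_refl 0, le_of_lt hT⟩) (hclmem s)
    rw [hX0 y] at this
    calc |Y y s - y| = ‖X y (cl s) - y‖ := by rw [Real.norm_eq_abs]
    _ ≤ Cv * Clam * ‖cl s - 0‖ := this
    _ ≤ Cv * Clam * T := by
        rw [Real.norm_eq_abs, sub_zero, abs_of_nonneg (hclmem s).1]
        exact mul_le_mul_of_nonneg_left (hclmem s).2 hM0
  -- compact region containing all trajectories starting within 1 of x₀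
  set K : Set ℝ := Icc (x₀ - 1 - Cv * Clam * T) (x₀ + 1 + Cv * Clam * T) with hK_def
  have hYK : ∀ y, |y - x₀| ≤ 1 → ∀ s, Y y s ∈ K := by
    intro y hy s
    have h1 := hYbd y s
    rw [abs_le] at hy h1
    exact ⟨by linarith [h1.1], by linarith [h1.2]⟩
  have hMT : (0:ℝ) ≤ Cv * Clam * T := mul_nonneg hM0 hT.le
  have hKconv : Convex ℝ K := convex_Icc _ _
  have hsegK : ∀ y, |y - x₀| ≤ 1 → ∀ s, ∀ τ ∈ Icc (0:ℝ) 1,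
      Y x₀ s + τ * (Y y s - Y x₀ s) ∈ K := by
    intro y hy s τ hτ
    have := hKconv.add_smul_sub_mem (hYK x₀ (by simp) s) (hYK y hy s) hτ
    simpa using this
  -- bound for g on [0,T] × K
  obtain ⟨L, hL⟩ : ∃ L, ∀ p ∈ Icc (0:ℝ) T ×ˢ K, ‖g p.1 p.2‖ ≤ L :=
    ((isCompact_Icc.prod isCompact_Icc).exists_bound_of_continuousOn hgcont.continuousOn)
  have hL0 : 0 ≤ L := le_trans (norm_nonneg _) (hL (0, x₀)
    ⟨⟨le_refl 0, le_of_lt hT⟩, ⟨by linarith, by linarith⟩⟩)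
  -- Hadamard factor A
  set A : ℝ → ℝ → ℝ := fun y s => ∫ τ in (0:ℝ)..1, g s (Y x₀ s + τ * (Y y s - Y x₀ s)) with hA_def
  have hAcont : ∀ y, Continuous (A y) := by
    intro y
    apply intervalIntegral.continuous_parametric_intervalIntegral_of_continuous'
      (f := fun s τ => g s (Y x₀ s + τ * (Y y s - Y x₀ s)))
    exact hgcont.comp (continuous_fst.prodMk
      ((hYcont x₀).comp continuous_fst |>.add
        (continuous_snd.mul (((hYcont y).comp continuous_fst).sub ((hYcont x₀).comp continuous_fst)))))
  -- Hadamard factorization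
  have hAformula : ∀ y s, v (Y y s) * lam s (Y y s) - v (Y x₀ s) * lam s (Y x₀ s)
      = A y s * (Y y s - Y x₀ s) := by
    intro y s
    set c := Y x₀ s
    set d := Y y s - Y x₀ s with hd_def
    have hφ : ∀ τ ∈ uIcc (0:ℝ) 1, HasDerivAt (fun τ => v (c + τ * d) * lam s (c + τ * d))
        (g s (c + τ * d) * d) τ := by
      intro τ _
      have hinner : HasDerivAt (fun τ : ℝ => c + τ * d) d τ := by
        simpa using ((hasDerivAt_id τ).mul_const d).const_add c
      exact (hgderiv s (c + τ * d)).comp τ hinner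
    have hint : IntervalIntegrable (fun τ => g s (c + τ * d) * d) volume 0 1 := by
      apply Continuous.intervalIntegrable
      exact ((hgcont.comp (continuous_const.prodMk
        (continuous_const.add (continuous_id.mul continuous_const)))).mul continuous_const)
    have := intervalIntegral.integral_eq_sub_of_hasDerivAt hφ hint
    rw [intervalIntegral.integral_mul_const] at this
    simp only [one_mul, zero_mul, add_zero] at this
    have hcd : Y y s = c + d := by rw [hd_def]; ring
    rw [hA_def]
    show v (Y y s) * lam s (Y y s) - v c * lam s c = (∫ τ in (0:ℝ)..1, g s (c + τ * d)) * d
    rw [hcd]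
    exact this.symm
  -- the primitive of A
  set P : ℝ → ℝ → ℝ := fun y r => ∫ u in (0:ℝ)..r, A y u with hP_def
  have hPderiv : ∀ y r, HasDerivAt (P y) (A y r) r := by
    intro y r
    exact intervalIntegral.integral_hasDerivAt_right
      ((hAcont y).intervalIntegrable 0 r)
      ((hAcont y).stronglyMeasurable.stronglyMeasurableAtFilter)
      (hAcont y).continuousAt
  -- key exact formula for the difference of trajectories
  have hKey : ∀ y, ∀ r ∈ Icc (0:ℝ) T, X y r - X x₀ r = (y - x₀) * Real.exp (P y r) := by
    intro y r hr
    set h : ℝ → ℝ := fun u => (X y u - X x₀ u) * Real.exp (-(P y u)) with hh_def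
    have hIccsub : Icc (0:ℝ) r ⊆ Icc 0 T := Icc_subset_Icc le_rfl hr.2
    have hhderiv : ∀ u ∈ Ico (0:ℝ) r, HasDerivWithinAt h 0 (Ici u) u := by
      intro u hu
      have huT : u ∈ Icc (0:ℝ) T := hIccsub ⟨hu.1, le_of_lt hu.2⟩
      have hD : HasDerivAt (fun u => X y u - X x₀ u) (A y u * (X y u - X x₀ u)) u := by
        have := (hXode y u huT).sub (hXode x₀ u huT)
        rw [show v (X y u) * lam u (X y u) - v (X x₀ u) * lam u (X x₀ u)
            = A y u * (X y u - X x₀ u) by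
          rw [← hYeq y u huT, ← hYeq x₀ u huT]; exact hAformula y u] at this
        exact this
      have hE : HasDerivAt (fun u => Real.exp (-(P y u))) (Real.exp (-(P y u)) * -(A y u)) u :=
        ((hPderiv y u).neg).exp
      have := hD.mul hE
      have h0 : A y u * (X y u - X x₀ u) * Real.exp (-(P y u))
          + (X y u - X x₀ u) * (Real.exp (-(P y u)) * -(A y u)) = 0 := by ring
      rw [h0] at this
      exact this.hasDerivWithinAt
    have hPcont : Continuous (P y) := by
      rw [continuous_iff_continuousAt]
      exact fun u => (hPderiv y u).continuousAt
    have hhcont : ContinuousOn h (Icc 0 r) := by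
      apply ContinuousOn.mul
      · exact ((hXcontOn y).mono hIccsub).sub ((hXcontOn x₀).mono hIccsub)
      · exact (Real.continuous_exp.comp hPcont.neg).continuousOn
    have hconst := constant_of_has_deriv_right_zero hhcont hhderiv r
      ⟨hr.1, le_refl r⟩
    have hh0 : h 0 = y - x₀ := by
      simp [hh_def, hP_def, hX0, intervalIntegral.integral_same]
    rw [hh0] at hconst
    have hexp : Real.exp (-(P y r)) ≠ 0 := Real.exp_ne_zero _
    have : (X y r - X x₀ r) = (y - x₀) * Real.exp (P y r) := by
      have h2 : (X y r - X x₀ r) * Real.exp (-(P y r)) = y - x₀ := hconst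
      rw [← h2, Real.exp_neg]
      field_simp
    exact this
  -- value of A at y = x₀
  have hAx0 : ∀ u, A x₀ u = g u (Y x₀ u) := by
    intro u
    simp [hA_def]
  -- bound on A and P
  have hAbd : ∀ y, |y - x₀| ≤ 1 → ∀ u ∈ Icc (0:ℝ) T, |A y u| ≤ L := by
    intro y hy u hu
    have hbb : ∀ τ ∈ Set.uIoc (0:ℝ) 1, ‖g u (Y x₀ u + τ * (Y y u - Y x₀ u))‖ ≤ L := by
      intro τ hτ
      rw [uIoc_of_le (by norm_num : (0:ℝ) ≤ 1)] at hτ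
      exact hL (u, Y x₀ u + τ * (Y y u - Y x₀ u)) ⟨hu, hsegK y hy u τ ⟨hτ.1.le, hτ.2⟩⟩
    have := intervalIntegral.norm_integral_le_of_norm_le_const hbb
    simpa [hA_def] using this
  have hPbd : ∀ y, |y - x₀| ≤ 1 → ∀ r ∈ Icc (0:ℝ) T, |P y r| ≤ L * T := by
    intro y hy r hr
    have := intervalIntegral.norm_integral_le_of_norm_le_const
      (C := L) (f := A y) (a := (0:ℝ)) (b := r)
      (fun u hu => by
        rw [uIoc_of_le hr.1] at hu
        exact hAbd y hy u ⟨hu.1.le, le_trans hu.2 hr.2⟩)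
    rw [Real.norm_eq_abs] at this
    calc |P y r| ≤ L * |r - 0| := this
    _ = L * r := by rw [sub_zero, abs_of_nonneg hr.1]
    _ ≤ L * T := mul_le_mul_of_nonneg_left hr.2 hL0
  -- Gronwall-type estimate
  have hDbd : ∀ y, |y - x₀| ≤ 1 → ∀ s ∈ Icc (0:ℝ) T,
      |X y s - X x₀ s| ≤ |y - x₀| * Real.exp (L * T) := by
    intro y hy s hs
    rw [hKey y s hs, abs_mul, abs_of_pos (Real.exp_pos _)]
    refine mul_le_mul_of_nonneg_left ?_ (abs_nonneg _)
    exact Real.exp_le_exp.mpr (le_trans (le_abs_self _) (hPbd y hy s hs))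
  -- continuity of y ↦ P y t at x₀
  have hPt : Filter.Tendsto (fun y => P y t) (nhds x₀) (nhds (P x₀ t)) := by
    rw [Metric.tendsto_nhds_nhds]
    intro ε hε
    set ε' : ℝ := ε / (2 * (T + 1)) with hε'_def
    have hε' : 0 < ε' := by positivity
    have hUC : UniformContinuousOn (fun p : ℝ × ℝ => g p.1 p.2) (Icc (0:ℝ) T ×ˢ K) :=
      (isCompact_Icc.prod isCompact_Icc).uniformContinuousOn_of_continuous hgcont.continuousOn
    rw [Metric.uniformContinuousOn_iff] at hUC
    obtain ⟨δ, hδ, hδε⟩ := hUC ε' hε'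
    refine ⟨min 1 (δ / (2 * Real.exp (L * T))), by positivity, ?_⟩
    intro y hy
    have hy1 : |y - x₀| ≤ 1 := by
      rw [Real.dist_eq] at hy
      exact le_of_lt (lt_of_lt_of_le hy (min_le_left _ _))
    have hyδ : |y - x₀| * Real.exp (L * T) < δ := by
      rw [Real.dist_eq] at hy
      have h1 : |y - x₀| < δ / (2 * Real.exp (L * T)) := lt_of_lt_of_le hy (min_le_right _ _)
      have h2 : (0:ℝ) < Real.exp (L * T) := Real.exp_pos _
      calc |y - x₀| * Real.exp (L * T) < δ / (2 * Real.exp (L * T)) * Real.exp (L * T) :=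
            mul_lt_mul_of_pos_right h1 h2
      _ = δ / 2 := by field_simp
      _ < δ := by linarith
    -- pointwise bound on A y u - A x₀ u for u ∈ [0,T]
    have hAdiff : ∀ u ∈ Icc (0:ℝ) T, |A y u - A x₀ u| ≤ ε' := by
      intro u hu
      rw [hAx0 u]
      have heq : A y u - g u (Y x₀ u)
          = ∫ τ in (0:ℝ)..1, (g u (Y x₀ u + τ * (Y y u - Y x₀ u)) - g u (Y x₀ u)) := by
        rw [intervalIntegral.integral_sub]
        · simp [hA_def]
        · apply Continuous.intervalIntegrable
          exact hgcont.comp (continuous_const.prodMk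
            (continuous_const.add (continuous_id.mul continuous_const)))
        · exact intervalIntegrable_const
      rw [heq]
      have hb : ∀ τ ∈ Set.uIoc (0:ℝ) 1,
          ‖g u (Y x₀ u + τ * (Y y u - Y x₀ u)) - g u (Y x₀ u)‖ ≤ ε' := by
        intro τ hτ
        rw [uIoc_of_le (by norm_num : (0:ℝ) ≤ 1)] at hτ
        have hτ' : τ ∈ Icc (0:ℝ) 1 := ⟨hτ.1.le, hτ.2⟩
        have hp : (u, Y x₀ u + τ * (Y y u - Y x₀ u)) ∈ Icc (0:ℝ) T ×ˢ K :=
          ⟨hu, hsegK y hy1 u τ hτ'⟩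
        have hq : (u, Y x₀ u) ∈ Icc (0:ℝ) T ×ˢ K := ⟨hu, hYK x₀ (by simp) u⟩
        have hdist : dist ((u, Y x₀ u + τ * (Y y u - Y x₀ u)) : ℝ × ℝ) (u, Y x₀ u) < δ := by
          rw [Prod.dist_eq]
          simp only [dist_self]
          rw [max_eq_right dist_nonneg, Real.dist_eq]
          have h3 : |Y x₀ u + τ * (Y y u - Y x₀ u) - Y x₀ u| = |τ| * |Y y u - Y x₀ u| := by
            rw [← abs_mul]; ring_nf
          rw [h3]
          have h4 : |Y y u - Y x₀ u| ≤ |y - x₀| * Real.exp (L * T) := by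
            rw [hYeq y u hu, hYeq x₀ u hu]
            exact hDbd y hy1 u hu
          calc |τ| * |Y y u - Y x₀ u| ≤ 1 * (|y - x₀| * Real.exp (L * T)) := by
                apply mul_le_mul (abs_le.mpr ⟨by linarith [hτ'.1], hτ'.2⟩) h4 (abs_nonneg _)
                  (by norm_num)
          _ = |y - x₀| * Real.exp (L * T) := one_mul _
          _ < δ := hyδ
        have := hδε _ hp _ hq hdist
        rw [Real.dist_eq] at this
        exact le_of_lt this
      have := intervalIntegral.norm_integral_le_of_norm_le_const hb
      simpa using this
    -- integrate the bound
    rw [Real.dist_eq]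
    have hsub : P y t - P x₀ t = ∫ u in (0:ℝ)..t, (A y u - A x₀ u) := by
      rw [intervalIntegral.integral_sub ((hAcont y).intervalIntegrable 0 t)
        ((hAcont x₀).intervalIntegrable 0 t)]
    rw [hsub]
    have hbd := intervalIntegral.norm_integral_le_of_norm_le_const
      (C := ε') (f := fun u => A y u - A x₀ u) (a := (0:ℝ)) (b := t)
      (fun u hu => by
        rw [uIoc_of_le ht.1] at hu
        exact hAdiff u ⟨hu.1.le, le_trans hu.2 ht.2⟩)
    rw [Real.norm_eq_abs] at hbd
    calc |∫ u in (0:ℝ)..t, (A y u - A x₀ u)| ≤ ε' * |t - 0| := hbd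
    _ = ε' * t := by rw [sub_zero, abs_of_nonneg ht.1]
    _ ≤ ε' * T := mul_le_mul_of_nonneg_left ht.2 hε'.le
    _ < ε := by
        rw [hε'_def]
        rw [div_mul_eq_mul_div, div_lt_iff₀ (by linarith : (0:ℝ) < 2 * (T + 1))]
        nlinarith
  -- identify exp (P x₀ t) with the claimed formula
  have hIdent : Real.exp (P x₀ t) = v (X x₀ t) / v x₀ *
      Real.exp (∫ s in (0:ℝ)..t, deriv (lam s) (X x₀ s) * v (X x₀ s)) := by
    have huIcc : Set.uIcc (0:ℝ) t = Icc 0 t := uIcc_of_le ht.1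
    have hsubT : Icc (0:ℝ) t ⊆ Icc 0 T := Icc_subset_Icc le_rfl ht.2
    -- split P x₀ t into two integrals
    have hI1cont : Continuous (fun u => deriv v (Y x₀ u) * lam u (Y x₀ u)) :=
      (hdvcont.comp (hYcont x₀)).mul (hlamC1.continuous.comp (continuous_id.prodMk (hYcont x₀)))
    have hI2cont : Continuous (fun u => deriv (lam u) (Y x₀ u) * v (Y x₀ u)) :=
      (hdlcont.comp (continuous_id.prodMk (hYcont x₀))).mul (hvC1.continuous.comp (hYcont x₀))
    have hsplit : P x₀ t = (∫ u in (0:ℝ)..t, deriv v (Y x₀ u) * lam u (Y x₀ u))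
        + ∫ u in (0:ℝ)..t, deriv (lam u) (Y x₀ u) * v (Y x₀ u) := by
      rw [hP_def]
      rw [← intervalIntegral.integral_add (hI1cont.intervalIntegrable 0 t)
        (hI2cont.intervalIntegrable 0 t)]
      apply intervalIntegral.integral_congr
      intro u hu
      rw [hAx0 u, hg_def]
    -- first integral via FTC
    have hFTC : (∫ u in (0:ℝ)..t, deriv v (Y x₀ u) * lam u (Y x₀ u))
        = Real.log (v (X x₀ t)) - Real.log (v x₀) := by
      have hderiv : ∀ u ∈ Set.uIcc (0:ℝ) t,
          HasDerivAt (fun u => Real.log (v (X x₀ u))) (deriv v (Y x₀ u) * lam u (Y x₀ u)) u := by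
        intro u hu
        rw [huIcc] at hu
        have huT : u ∈ Icc (0:ℝ) T := hsubT hu
        have hXd := hXode x₀ u huT
        have hvd : HasDerivAt v (deriv v (X x₀ u)) (X x₀ u) :=
          ((hvC1.differentiable one_ne_zero).differentiableAt).hasDerivAt
        have hlog : HasDerivAt Real.log (v (X x₀ u))⁻¹ (v (X x₀ u)) :=
          Real.hasDerivAt_log (ne_of_gt (hvpos _))
        have hcomp := (hlog.comp _ hvd).comp u hXd
        have : ((v (X x₀ u))⁻¹ * deriv v (X x₀ u)) * (v (X x₀ u) * lam u (X x₀ u))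
            = deriv v (Y x₀ u) * lam u (Y x₀ u) := by
          rw [hYeq x₀ u huT]
          field_simp [(hvpos (X x₀ u)).ne']
        rw [← this]
        exact hcomp
      have hint : IntervalIntegrable (fun u => deriv v (Y x₀ u) * lam u (Y x₀ u)) volume 0 t :=
        hI1cont.intervalIntegrable 0 t
      have := intervalIntegral.integral_eq_sub_of_hasDerivAt hderiv hint
      rw [this, hX0]
    -- second integral agrees with the target
    have hI2eq : (∫ u in (0:ℝ)..t, deriv (lam u) (Y x₀ u) * v (Y x₀ u))
        = ∫ s in (0:ℝ)..t, deriv (lam s) (X x₀ s) * v (X x₀ s) := by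
      apply intervalIntegral.integral_congr
      intro u hu
      rw [huIcc] at hu
      simp only [hYeq x₀ u (hsubT hu)]
    rw [hsplit, hFTC, hI2eq, Real.exp_add, Real.exp_sub,
      Real.exp_log (hvpos (X x₀ t)), Real.exp_log (hvpos x₀)]
  -- conclude via the slope characterization
  rw [← hIdent, hasDerivAt_iff_tendsto_slope]
  have hslope : ∀ y ∈ ({x₀}ᶜ : Set ℝ), slope (fun y => X y t) x₀ y = Real.exp (P y t) := by
    intro y hy
    rw [slope_def_field]
    rw [hKey y t ht]
    field_simp [sub_ne_zero.mpr (by simpa using hy)]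
  have htend : Filter.Tendsto (fun y => Real.exp (P y t)) (nhdsWithin x₀ ({x₀}ᶜ : Set ℝ))
      (nhds (Real.exp (P x₀ t))) :=
    (Real.continuous_exp.continuousAt.tendsto.comp (hPt.mono_left nhdsWithin_le_nhds))
  apply htend.congr'
  filter_upwards [self_mem_nhdsWithin] with y hy
  exact (hslope y hy).symm
end

section
/- Under the Osgood-type bound, the autonomous discontinuous ODE x' = v(x) λ̃(x) has a unique Filippov solution, provided λ̃ is globally Lipschitz, v ∈ L^∞ with v ≥ v̲ > 0, and the set of points x where λ̃(x) ≠ 0 and v is discontinuous at x has Lebesgue measure zero. In particular, at any point x with λ̃(x) = 0, the function g(z) := lim_{δ→0} esssup_{y∈B_δ(x)} ((v·λ̃)(y+z) sgn(z))⁺ satisfies g(z) ≤ ‖v‖_∞ ‖λ̃'‖_∞ |z|, hence ∫_{−δ̃}^{0} 1/g(u) du = ∞ = ∫_{0}^{δ̃} 1/g(u) du for all small δ̃ > 0. -/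
open MeasureTheory Set Filter
open scoped ENNReal

lemma aux_Ioc (C δt : ℝ) (hδ : 0 < δt) :
    (∫⁻ u in Ioc (0:ℝ) δt, (ENNReal.ofReal (C * u))⁻¹) = ⊤ := by
  rcases le_or_gt C 0 with hC | hC
  · have hcong : ∀ u ∈ Ioc (0:ℝ) δt, (ENNReal.ofReal (C * u))⁻¹ = (⊤ : ℝ≥0∞) := by
      intro u hu
      have h0 : C * u ≤ 0 := mul_nonpos_of_nonpos_of_nonneg hC hu.1.le
      simp [ENNReal.ofReal_eq_zero.2 h0]
    rw [setLIntegral_congr_fun measurableSet_Ioc hcong, setLIntegral_const]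
    rw [Real.volume_Ioc]
    rw [ENNReal.top_mul]
    simp [hδ, hδ.le, sub_pos]
  · by_contra h
    have hlt : (∫⁻ u in Ioc (0:ℝ) δt, (ENNReal.ofReal (C * u))⁻¹) < ⊤ := lt_top_iff_ne_top.2 h
    have hcong : ∀ u ∈ Ioc (0:ℝ) δt,
        (ENNReal.ofReal (C * u))⁻¹ = ENNReal.ofReal ((C * u)⁻¹) := by
      intro u hu
      rw [ENNReal.ofReal_inv_of_pos (mul_pos hC hu.1)]
    rw [setLIntegral_congr_fun measurableSet_Ioc hcong] at hlt
    have hmeas : AEMeasurable (fun u : ℝ => (C * u)⁻¹)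
        (volume.restrict (Ioc (0:ℝ) δt)) := by
      fun_prop
    have hnonneg : 0 ≤ᵐ[volume.restrict (Ioc (0:ℝ) δt)] fun u : ℝ => (C * u)⁻¹ := by
      refine ae_restrict_of_forall_mem measurableSet_Ioc fun u hu => ?_
      exact inv_nonneg.2 (mul_pos hC hu.1).le
    have hint : IntegrableOn (fun u : ℝ => (C * u)⁻¹) (Ioc (0:ℝ) δt) := by
      refine ⟨hmeas.aestronglyMeasurable, ?_⟩
      rw [hasFiniteIntegral_iff_ofReal hnonneg]
      exact hlt
    have hint2 : IntegrableOn (fun u : ℝ => u⁻¹) (Ioc (0:ℝ) δt) := by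
      have h2 := hint.const_mul C
      have heq : (fun u : ℝ => C * (C * u)⁻¹) = fun u : ℝ => u⁻¹ := by
        funext u
        rw [mul_inv, ← mul_assoc, mul_inv_cancel₀ hC.ne', one_mul]
      rwa [heq] at h2
    have hii : IntervalIntegrable (fun u : ℝ => u⁻¹) volume 0 δt := by
      rw [intervalIntegrable_iff, uIoc_of_le hδ.le]
      exact hint2
    rw [intervalIntegrable_inv_iff] at hii
    rcases hii with h1 | h1
    · exact hδ.ne h1
    · exact h1 left_mem_uIcc

/-- Osgood bound at zeros of the Lipschitz part, the formalizable content of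
uniqueness of Filippov solutions for the autonomous discontinuous ODE `x' = v(x)λ̃(x)`:
at a point `x` with `λ̃(x) = 0`, the function
`g(z) = lim_{δ→0⁺} esssup_{y ∈ B_δ(x)} ((v·λ̃)(y+z) sgn z)⁺`
satisfies `g(z) ≤ ‖v‖_∞ ‖λ̃'‖_∞ |z|`, and hence the Osgood divergence
`∫_{−δ̃}^0 1/g = ∞ = ∫_0^{δ̃} 1/g` holds for every `δ̃ > 0`. -/
theorem stmt9
    (vlow Cv Llam : ℝ) (hvlow : 0 < vlow)
    (v : ℝ → ℝ) (hmeas : Measurable v)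
    (hv : ∀ᵐ y : ℝ, vlow ≤ v y ∧ v y ≤ Cv)
    (lamt : ℝ → ℝ)
    (hlamLip : ∀ a b, |lamt a - lamt b| ≤ Llam * |a - b|)
    (x : ℝ) (hx0 : lamt x = 0)
    (g : ℝ → ℝ) (hgnn : ∀ z, 0 ≤ g z)
    (hgdef : ∀ z, Tendsto
      (fun δ => essSup (fun y => max ((v (y + z) * lamt (y + z)) * Real.sign z) 0)
        (volume.restrict (Metric.ball x δ)))
      (nhdsWithin 0 (Ioi 0)) (nhds (g z))) :
    (∀ z : ℝ, g z ≤ Cv * Llam * |z|) ∧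
    (∀ δt : ℝ, 0 < δt →
      (∫⁻ u in Ioc (0:ℝ) δt, (ENNReal.ofReal (g u))⁻¹) = ⊤ ∧
      (∫⁻ u in Ico (-δt) (0:ℝ), (ENNReal.ofReal (g u))⁻¹) = ⊤) := by
  have hLlam : 0 ≤ Llam := by
    have h1 := hlamLip (x + 1) x
    simp only [add_sub_cancel_left, abs_one, mul_one] at h1
    exact le_trans (abs_nonneg _) h1
  have hCv : 0 < Cv := by
    obtain ⟨y, hy⟩ := hv.exists
    exact lt_of_lt_of_le hvlow (le_trans hy.1 hy.2)
  have hCnn : 0 ≤ Cv * Llam := mul_nonneg hCv.le hLlam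
  have part1 : ∀ z, g z ≤ Cv * Llam * |z| := by
    intro z
    have hsign : |Real.sign z| ≤ 1 := by
      rcases lt_trichotomy z 0 with hz | hz | hz
      · rw [Real.sign_of_neg hz]; norm_num
      · rw [hz, Real.sign_zero]; norm_num
      · rw [Real.sign_of_pos hz]; norm_num
    have hvz : ∀ᵐ y : ℝ, vlow ≤ v (y + z) ∧ v (y + z) ≤ Cv := by
      rw [ae_iff] at hv ⊢
      have hset : {y : ℝ | ¬(vlow ≤ v (y + z) ∧ v (y + z) ≤ Cv)}
          = (fun y : ℝ => y + z) ⁻¹' {y : ℝ | ¬(vlow ≤ v y ∧ v y ≤ Cv)} := rfl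
      rw [hset, measure_preimage_add_right]
      exact hv
    have key : ∀ δ ∈ Ioi (0:ℝ),
        essSup (fun y => max ((v (y + z) * lamt (y + z)) * Real.sign z) 0)
          (volume.restrict (Metric.ball x δ)) ≤ Cv * Llam * (|z| + δ) := by
      intro δ hδ
      have hδ' : (0:ℝ) < δ := hδ
      haveI : (ae (volume.restrict (Metric.ball x δ))).NeBot := by
        rw [ae_neBot, Ne, Measure.restrict_eq_zero]
        exact (Metric.measure_ball_pos volume x hδ').ne'
      have hb : ∀ᵐ y ∂(volume.restrict (Metric.ball x δ)),
          max ((v (y + z) * lamt (y + z)) * Real.sign z) 0 ≤ Cv * Llam * (|z| + δ) := by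
        have h1 : ∀ᵐ y ∂(volume.restrict (Metric.ball x δ)),
            vlow ≤ v (y + z) ∧ v (y + z) ≤ Cv := ae_restrict_of_ae hvz
        have h2 : ∀ᵐ y ∂(volume.restrict (Metric.ball x δ)), y ∈ Metric.ball x δ :=
          ae_restrict_mem Metric.isOpen_ball.measurableSet
        filter_upwards [h1, h2] with y hy hyb
        have hbound : 0 ≤ Cv * Llam * (|z| + δ) :=
          mul_nonneg hCnn (add_nonneg (abs_nonneg _) hδ'.le)
        refine max_le ?_ hbound
        have hvy : |v (y + z)| ≤ Cv := by
          rw [abs_of_nonneg (le_trans hvlow.le hy.1)]; exact hy.2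
        have hly : |lamt (y + z)| ≤ Llam * (|z| + δ) := by
          have := hlamLip (y + z) x
          rw [hx0, sub_zero] at this
          refine le_trans this ?_
          have hdist : |y + z - x| ≤ |z| + |y - x| := by
            have : y + z - x = z + (y - x) := by ring
            rw [this]; exact abs_add_le _ _
          have hyx : |y - x| ≤ δ := by
            rw [Metric.mem_ball, Real.dist_eq] at hyb
            exact hyb.le
          have : |y + z - x| ≤ |z| + δ := le_trans hdist (by linarith)
          exact mul_le_mul_of_nonneg_left this hLlam
        calc v (y + z) * lamt (y + z) * Real.sign z
            ≤ |v (y + z) * lamt (y + z) * Real.sign z| := le_abs_self _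
          _ = |v (y + z)| * |lamt (y + z)| * |Real.sign z| := by rw [abs_mul, abs_mul]
          _ ≤ Cv * (Llam * (|z| + δ)) * 1 := by
              refine mul_le_mul (mul_le_mul hvy hly (abs_nonneg _) hCv.le) hsign
                (abs_nonneg _) ?_
              positivity
          _ = Cv * Llam * (|z| + δ) := by ring
      exact limsup_le_of_le
        (isCoboundedUnder_le_of_le _ fun y => le_max_right _ 0) hb
    have hlim2 : Tendsto (fun δ : ℝ => Cv * Llam * (|z| + δ)) (nhdsWithin 0 (Ioi 0))
        (nhds (Cv * Llam * |z|)) := by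
      have hc : Tendsto (fun δ : ℝ => Cv * Llam * (|z| + δ)) (nhds 0)
          (nhds (Cv * Llam * (|z| + 0))) := by
        apply Continuous.tendsto
        continuity
      simpa using hc.mono_left nhdsWithin_le_nhds
    refine le_of_tendsto_of_tendsto (hgdef z) hlim2 ?_
    filter_upwards [self_mem_nhdsWithin] with δ hδ using key δ hδ
  refine ⟨part1, fun δt hδt => ?_⟩
  constructor
  · have hmono : ∀ᵐ u ∂(volume.restrict (Ioc (0:ℝ) δt)),
        (ENNReal.ofReal (Cv * Llam * u))⁻¹ ≤ (ENNReal.ofReal (g u))⁻¹ := by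
      refine ae_restrict_of_forall_mem measurableSet_Ioc fun u hu => ?_
      refine ENNReal.inv_le_inv' (ENNReal.ofReal_le_ofReal ?_)
      have := part1 u
      rwa [abs_of_pos hu.1] at this
    have h1 := lintegral_mono_ae hmono
    rw [aux_Ioc (Cv * Llam) δt hδt] at h1
    exact top_unique h1
  · have hneg : (∫⁻ u in Ico (-δt) (0:ℝ), (ENNReal.ofReal (Cv * Llam * (-u)))⁻¹) = ⊤ := by
      have hmp : MeasurePreserving (Neg.neg : ℝ → ℝ) volume volume :=
        Measure.measurePreserving_neg volume
      have hemb : MeasurableEmbedding (Neg.neg : ℝ → ℝ) :=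
        (Homeomorph.neg ℝ).measurableEmbedding
      have hpre : (Neg.neg : ℝ → ℝ) ⁻¹' (Ioc (0:ℝ) δt) = Ico (-δt) (0:ℝ) := by
        ext u
        simp only [mem_preimage, mem_Ioc, mem_Ico]
        constructor
        · rintro ⟨h1, h2⟩; constructor <;> linarith
        · rintro ⟨h1, h2⟩; constructor <;> linarith
      have h2 := hmp.setLIntegral_comp_preimage_emb hemb
        (fun w => (ENNReal.ofReal (Cv * Llam * w))⁻¹) (Ioc (0:ℝ) δt)
      rw [hpre] at h2
      rw [h2]
      exact aux_Ioc (Cv * Llam) δt hδt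
    have hmono : ∀ᵐ u ∂(volume.restrict (Ico (-δt) (0:ℝ))),
        (ENNReal.ofReal (Cv * Llam * (-u)))⁻¹ ≤ (ENNReal.ofReal (g u))⁻¹ := by
      refine ae_restrict_of_forall_mem measurableSet_Ico fun u hu => ?_
      refine ENNReal.inv_le_inv' (ENNReal.ofReal_le_ofReal ?_)
      have := part1 u
      rwa [abs_of_neg hu.2] at this
    have h1 := lintegral_mono_ae hmono
    rw [hneg] at h1
    exact top_unique h1
end

section
/- Convergence of compositions in L¹_loc: let f_ε → f in L¹_loc(ℝ), g_ε → g uniformly on ℝ, where each g_ε ∈ W^{1,∞}_loc(ℝ) satisfies g_ε' ≥ C > 0 a.e. for a constant C independent of ε. Then f_ε ∘ g_ε → f ∘ g in L¹_loc(ℝ). -/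
open MeasureTheory Set Filter

open scoped ENNReal

private lemma stmt11_abs_low {C : ℝ} (hC : 0 < C) {φ : ℝ → ℝ}
    (hlow : ∀ x y : ℝ, x ≤ y → C * (y - x) ≤ φ y - φ x) (x y : ℝ) :
    C * |y - x| ≤ |φ y - φ x| := by
  rcases le_total x y with h | h
  · have h1 := hlow x y h
    rw [abs_of_nonneg (by linarith), abs_of_nonneg (by nlinarith)]
    linarith
  · have h1 := hlow y x h
    rw [abs_of_nonpos (by linarith), abs_of_nonpos (by nlinarith)]
    nlinarith

private lemma stmt11_surj {C : ℝ} (hC : 0 < C) {φ : ℝ → ℝ} (hcont : Continuous φ)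
    (hlow : ∀ x y : ℝ, x ≤ y → C * (y - x) ≤ φ y - φ x) :
    Function.Surjective φ := by
  intro z
  set q : ℝ := (z - φ 0) / C with hq
  have hCq : C * q = z - φ 0 := by rw [hq]; field_simp
  set lo : ℝ := min 0 q - 1 with hlo
  set hi : ℝ := max 0 q + 1 with hhi
  have hlo0 : lo ≤ 0 := by linarith [min_le_left (0:ℝ) q, hlo]
  have hhi0 : 0 ≤ hi := by linarith [le_max_left (0:ℝ) q, hhi]
  have hloq : lo ≤ q := by linarith [min_le_right (0:ℝ) q, hlo]
  have hhiq : q ≤ hi := by linarith [le_max_right (0:ℝ) q, hhi]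
  have h1 : φ lo ≤ z := by
    have := hlow lo 0 hlo0
    nlinarith [mul_le_mul_of_nonneg_left hloq hC.le]
  have h2 : z ≤ φ hi := by
    have := hlow 0 hi hhi0
    nlinarith [mul_le_mul_of_nonneg_left hhiq hC.le]
  have hlohi : lo ≤ hi := le_trans hlo0 hhi0
  obtain ⟨x, _, hx⟩ := intermediate_value_Icc hlohi hcont.continuousOn ⟨h1, h2⟩
  exact ⟨x, hx⟩

private lemma stmt11_lemA {C : ℝ} (hC : 0 < C) {φ : ℝ → ℝ} (hcont : Continuous φ)
    (hlow : ∀ x y : ℝ, x ≤ y → C * (y - x) ≤ φ y - φ x)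
    {a b c d : ℝ} (himg : ∀ x ∈ Ioo a b, φ x ∈ Ioo c d)
    (k : ℝ → ℝ≥0∞) (hk : Measurable k) :
    ∫⁻ x in Ioo a b, k (φ x) ≤ ENNReal.ofReal C⁻¹ * ∫⁻ y in Ioo c d, k y := by
  have hφm : Measurable φ := hcont.measurable
  have hinj : Function.Injective φ := by
    intro x y hxy
    by_contra hne
    rcases lt_or_gt_of_ne hne with h | h
    · have := hlow x y h.le; nlinarith
    · have := hlow y x h.le; nlinarith
  have hsurj := stmt11_surj hC hcont hlow
  set e : ℝ ≃ ℝ := Equiv.ofBijective φ ⟨hinj, hsurj⟩ with he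
  have heφ : ∀ x, e x = φ x := fun x => rfl
  have hψ : LipschitzWith (Real.toNNReal C⁻¹) e.symm := by
    apply LipschitzWith.of_dist_le_mul
    intro u v
    have h1 : C * dist (e.symm u) (e.symm v) ≤ dist u v := by
      have h2 := stmt11_abs_low hC hlow (e.symm v) (e.symm u)
      rw [← heφ, ← heφ, e.apply_symm_apply, e.apply_symm_apply] at h2
      simpa [Real.dist_eq] using h2
    rw [Real.coe_toNNReal _ (inv_nonneg.mpr hC.le)]
    rw [inv_mul_eq_div, le_div_iff₀ hC]
    linarith [h1]
  have hmb : ∀ s : Set ℝ, volume (φ ⁻¹' s) ≤ ENNReal.ofReal C⁻¹ * volume s := by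
    intro s
    have him : φ ⁻¹' s = e.symm '' s := by
      rw [Equiv.image_eq_preimage_symm, Equiv.symm_symm]
      rfl
    rw [him]
    have h3 := hψ.hausdorffMeasure_image_le (d := 1) zero_le_one s
    rw [MeasureTheory.hausdorffMeasure_real] at h3
    simpa [ENNReal.rpow_one, ENNReal.ofReal] using h3
  rw [← lintegral_map hk hφm]
  have hle : Measure.map φ (volume.restrict (Ioo a b)) ≤
      (ENNReal.ofReal C⁻¹) • (volume.restrict (Ioo c d)) := by
    rw [Measure.le_iff]
    intro s hs
    rw [Measure.map_apply hφm hs, Measure.restrict_apply (hs.preimage hφm), Measure.smul_apply, Measure.restrict_apply hs, smul_eq_mul]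
    calc volume (φ ⁻¹' s ∩ Ioo a b) ≤ volume (φ ⁻¹' (s ∩ Ioo c d)) := by
          apply measure_mono
          rintro x ⟨hxs, hxab⟩
          exact ⟨hxs, himg x hxab⟩
      _ ≤ ENNReal.ofReal C⁻¹ * volume (s ∩ Ioo c d) := hmb _
  calc ∫⁻ y, k y ∂(Measure.map φ (volume.restrict (Ioo a b)))
      ≤ ∫⁻ y, k y ∂((ENNReal.ofReal C⁻¹) • (volume.restrict (Ioo c d))) :=
        lintegral_mono' hle (le_refl _)
    _ = ENNReal.ofReal C⁻¹ * ∫⁻ y in Ioo c d, k y := lintegral_smul_measure _ _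

theorem stmt11
    (C : ℝ) (hC : 0 < C)
    (f g : ℝ → ℝ) (F G : ℝ → ℝ → ℝ)
    (hfmeas : Measurable f) (hFmeas : ∀ ε, Measurable (F ε))
    (hfloc : LocallyIntegrable f volume)
    (hFloc : ∀ ε : ℝ, 0 < ε → LocallyIntegrable (F ε) volume)
    (hGlip : ∀ ε : ℝ, 0 < ε → LocallyLipschitz (G ε))
    (hglip : LocallyLipschitz g)
    (hGlow : ∀ ε : ℝ, 0 < ε → ∀ x y : ℝ, x ≤ y → C * (y - x) ≤ G ε y - G ε x)
    (hglow : ∀ x y : ℝ, x ≤ y → C * (y - x) ≤ g y - g x)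
    (hfconv : ∀ a b : ℝ, Tendsto (fun ε => ∫ x in Ioo a b, |F ε x - f x|)
      (nhdsWithin 0 (Ioi 0)) (nhds 0))
    (hgconv : TendstoUniformly G g (nhdsWithin 0 (Ioi 0))) :
    ∀ a b : ℝ, Tendsto (fun ε => ∫ x in Ioo a b, |F ε (G ε x) - f (g x)|)
      (nhdsWithin 0 (Ioi 0)) (nhds 0) := by
  intro a b
  rcases le_or_gt b a with hba | hab
  · have hempty : Ioo a b = ∅ := Ioo_eq_empty (not_lt.mpr hba)
    simp only [hempty, Measure.restrict_empty, integral_zero_measure]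
    exact tendsto_const_nhds
  set c : ℝ := g a - 2 with hc
  set d : ℝ := g b + 2 with hd
  have hgmono : ∀ x y : ℝ, x ≤ y → g x ≤ g y := by
    intro x y hxy; have := hglow x y hxy; nlinarith
  have hgcont : Continuous g := hglip.continuous
  have hgm : Measurable g := hgcont.measurable
  have hfint : IntegrableOn f (Ioo c d) volume :=
    (hfloc.integrableOn_isCompact isCompact_Icc).mono_set Ioo_subset_Icc_self
  -- main lintegral convergence
  have hL : Tendsto (fun ε => ∫⁻ x in Ioo a b, ENNReal.ofReal |F ε (G ε x) - f (g x)|)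
      (nhdsWithin (0:ℝ) (Ioi 0)) (nhds 0) := by
    rw [ENNReal.tendsto_nhds_zero]
    intro δ hδ
    set δ' : ℝ := (min δ 1).toReal with hδ'
    have hmne : min δ 1 ≠ ⊤ := ne_top_of_le_ne_top (by simp) (min_le_right _ _)
    have hmin : (0:ℝ≥0∞) < min δ 1 := lt_min hδ zero_lt_one
    have hδ'pos : 0 < δ' := ENNReal.toReal_pos hmin.ne' hmne
    have hofδ' : ENNReal.ofReal δ' = min δ 1 := ENNReal.ofReal_toReal hmne
    suffices h : ∀ᶠ ε in nhdsWithin (0:ℝ) (Ioi 0),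
        (∫⁻ x in Ioo a b, ENNReal.ofReal |F ε (G ε x) - f (g x)|) ≤ ENNReal.ofReal δ' by
      filter_upwards [h] with ε hε
      exact hε.trans (hofδ' ▸ min_le_left _ _)
    -- continuous approximation of f on Ioo c d
    set f0 : ℝ → ℝ := (Ioo c d).indicator f with hf0
    have hf0int : Integrable f0 volume := (integrable_indicator_iff measurableSet_Ioo).mpr hfint
    obtain ⟨h, hhsupp, hhdist, hhcont, hhintg⟩ :=
      hf0int.exists_hasCompactSupport_integral_sub_le
        (show (0:ℝ) < C * (δ' / 4) by positivity)
    have hP : (∫⁻ y in Ioo c d, ENNReal.ofReal |f y - h y|) ≤ ENNReal.ofReal (C * (δ' / 4)) := by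
      have e1 : (∫⁻ y in Ioo c d, ENNReal.ofReal |f y - h y|)
          = ∫⁻ y in Ioo c d, ENNReal.ofReal |f0 y - h y| :=
        setLIntegral_congr_fun measurableSet_Ioo
          (fun y hy => by rw [hf0, indicator_of_mem hy])
      calc (∫⁻ y in Ioo c d, ENNReal.ofReal |f y - h y|)
          = ∫⁻ y in Ioo c d, ENNReal.ofReal |f0 y - h y| := e1
        _ ≤ ∫⁻ y, ENNReal.ofReal |f0 y - h y| := lintegral_mono' Measure.restrict_le_self (le_refl _)
        _ = ENNReal.ofReal (∫ y, |f0 y - h y|) :=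
            (ofReal_integral_eq_lintegral_ofReal ((hf0int.sub hhintg).abs)
              (ae_of_all _ fun y => abs_nonneg _)).symm
        _ ≤ ENNReal.ofReal (C * (δ' / 4)) := by
            apply ENNReal.ofReal_le_ofReal
            simpa [Real.norm_eq_abs] using hhdist
    -- uniform continuity of h
    have hunif : UniformContinuous h := hhsupp.uniformContinuous_of_continuous hhcont
    have h4pos : (0:ℝ) < 4 * (b - a + 1) := by nlinarith
    set ρ : ℝ := δ' / (4 * (b - a + 1)) with hρ
    have hρpos : 0 < ρ := div_pos hδ'pos h4pos
    obtain ⟨η, hηpos, hη⟩ := Metric.uniformContinuous_iff.mp hunif ρ hρpos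
    -- eventual facts
    have E2 : ∀ᶠ ε in nhdsWithin (0:ℝ) (Ioi 0), ∀ x, dist (g x) (G ε x) < min 1 η :=
      Metric.tendstoUniformly_iff.mp hgconv _ (lt_min one_pos hηpos)
    have hM : Tendsto (fun ε => ∫⁻ y in Ioo c d, ENNReal.ofReal |F ε y - f y|)
        (nhdsWithin (0:ℝ) (Ioi 0)) (nhds 0) := by
      have h1 : Tendsto (fun ε => ENNReal.ofReal (∫ y in Ioo c d, |F ε y - f y|))
          (nhdsWithin (0:ℝ) (Ioi 0)) (nhds (ENNReal.ofReal 0)) :=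
        (ENNReal.continuous_ofReal.tendsto 0).comp (hfconv c d)
      rw [ENNReal.ofReal_zero] at h1
      refine h1.congr' ?_
      filter_upwards [self_mem_nhdsWithin] with ε hε
      have hFint : IntegrableOn (F ε) (Ioo c d) volume :=
        ((hFloc ε hε).integrableOn_isCompact isCompact_Icc).mono_set Ioo_subset_Icc_self
      exact ofReal_integral_eq_lintegral_ofReal ((hFint.sub hfint).abs)
        (ae_of_all _ fun y => abs_nonneg _)
    have E3 : ∀ᶠ ε in nhdsWithin (0:ℝ) (Ioi 0),
        (∫⁻ y in Ioo c d, ENNReal.ofReal |F ε y - f y|) < ENNReal.ofReal (C * (δ' / 4)) :=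
      hM.eventually_lt_const (by exact ENNReal.ofReal_pos.mpr (by positivity))
    filter_upwards [self_mem_nhdsWithin, E2, E3] with ε hε hdist hMε
    have hε' : (0:ℝ) < ε := hε
    have hGc : Continuous (G ε) := (hGlip ε hε').continuous
    have hGm : Measurable (G ε) := hGc.measurable
    have himgG : ∀ x ∈ Ioo a b, G ε x ∈ Ioo c d := by
      intro x hx
      have h1 : |g x - G ε x| < 1 := by
        have := (lt_min_iff.mp (hdist x)).1
        rwa [Real.dist_eq] at this
      have h2 := abs_lt.mp h1
      have hga : g a ≤ g x := hgmono a x hx.1.le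
      have hgb : g x ≤ g b := hgmono x b hx.2.le
      constructor
      · simp only [hc]; linarith [h2.2]
      · simp only [hd]; linarith [h2.1]
    have himgg : ∀ x ∈ Ioo a b, g x ∈ Ioo c d := by
      intro x hx
      have hga : g a ≤ g x := hgmono a x hx.1.le
      have hgb : g x ≤ g b := hgmono x b hx.2.le
      constructor
      · simp only [hc]; linarith
      · simp only [hd]; linarith
    -- measurable kernels
    set k1 : ℝ → ℝ≥0∞ := fun y => ENNReal.ofReal |F ε y - f y| with hk1
    set k2 : ℝ → ℝ≥0∞ := fun y => ENNReal.ofReal |f y - h y| with hk2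
    have hk1m : Measurable k1 := ((hFmeas ε).sub hfmeas).abs.ennreal_ofReal
    have hk2m : Measurable k2 := (hfmeas.sub hhcont.measurable).abs.ennreal_ofReal
    have hT1 : (∫⁻ x in Ioo a b, k1 (G ε x)) ≤ ENNReal.ofReal (δ' / 4) := by
      calc (∫⁻ x in Ioo a b, k1 (G ε x))
          ≤ ENNReal.ofReal C⁻¹ * ∫⁻ y in Ioo c d, k1 y :=
            stmt11_lemA hC hGc (hGlow ε hε') himgG k1 hk1m
        _ ≤ ENNReal.ofReal C⁻¹ * ENNReal.ofReal (C * (δ' / 4)) := by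
            exact mul_le_mul_right hMε.le _
        _ = ENNReal.ofReal (C⁻¹ * (C * (δ' / 4))) :=
            (ENNReal.ofReal_mul (inv_nonneg.mpr hC.le)).symm
        _ = ENNReal.ofReal (δ' / 4) := by
            congr 1; field_simp
    have hT2 : (∫⁻ x in Ioo a b, k2 (G ε x)) ≤ ENNReal.ofReal (δ' / 4) := by
      calc (∫⁻ x in Ioo a b, k2 (G ε x))
          ≤ ENNReal.ofReal C⁻¹ * ∫⁻ y in Ioo c d, k2 y :=
            stmt11_lemA hC hGc (hGlow ε hε') himgG k2 hk2m
        _ ≤ ENNReal.ofReal C⁻¹ * ENNReal.ofReal (C * (δ' / 4)) := mul_le_mul_right hP _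
        _ = ENNReal.ofReal (C⁻¹ * (C * (δ' / 4))) :=
            (ENNReal.ofReal_mul (inv_nonneg.mpr hC.le)).symm
        _ = ENNReal.ofReal (δ' / 4) := by congr 1; field_simp
    have hT4 : (∫⁻ x in Ioo a b, k2 (g x)) ≤ ENNReal.ofReal (δ' / 4) := by
      calc (∫⁻ x in Ioo a b, k2 (g x))
          ≤ ENNReal.ofReal C⁻¹ * ∫⁻ y in Ioo c d, k2 y :=
            stmt11_lemA hC hgcont hglow himgg k2 hk2m
        _ ≤ ENNReal.ofReal C⁻¹ * ENNReal.ofReal (C * (δ' / 4)) := mul_le_mul_right hP _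
        _ = ENNReal.ofReal (C⁻¹ * (C * (δ' / 4))) :=
            (ENNReal.ofReal_mul (inv_nonneg.mpr hC.le)).symm
        _ = ENNReal.ofReal (δ' / 4) := by congr 1; field_simp
    have hT3 : (∫⁻ x in Ioo a b, ENNReal.ofReal |h (G ε x) - h (g x)|)
        ≤ ENNReal.ofReal (δ' / 4) := by
      have hpt : ∀ x : ℝ, ENNReal.ofReal |h (G ε x) - h (g x)| ≤ ENNReal.ofReal ρ := by
        intro x
        apply ENNReal.ofReal_le_ofReal
        have hd1 : dist (G ε x) (g x) < η := by
          have := (lt_min_iff.mp (hdist x)).2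
          rwa [dist_comm] at this
        have := hη hd1
        rw [Real.dist_eq] at this
        exact this.le
      calc (∫⁻ x in Ioo a b, ENNReal.ofReal |h (G ε x) - h (g x)|)
          ≤ ∫⁻ _x in Ioo a b, ENNReal.ofReal ρ := lintegral_mono hpt
        _ = ENNReal.ofReal ρ * volume (Ioo a b) := setLIntegral_const _ _
        _ = ENNReal.ofReal ρ * ENNReal.ofReal (b - a) := by rw [Real.volume_Ioo]
        _ = ENNReal.ofReal (ρ * (b - a)) := (ENNReal.ofReal_mul hρpos.le).symm
        _ ≤ ENNReal.ofReal (δ' / 4) := by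
            apply ENNReal.ofReal_le_ofReal
            rw [hρ, div_mul_eq_mul_div, div_le_div_iff₀ h4pos (by norm_num : (0:ℝ) < 4)]
            nlinarith
    -- combine
    calc (∫⁻ x in Ioo a b, ENNReal.ofReal |F ε (G ε x) - f (g x)|)
        ≤ ∫⁻ x in Ioo a b, (k1 (G ε x) + k2 (G ε x)
            + ENNReal.ofReal |h (G ε x) - h (g x)| + k2 (g x)) := by
          apply lintegral_mono
          intro x
          rw [hk1, hk2]
          simp only
          rw [← ENNReal.ofReal_add (abs_nonneg _) (abs_nonneg _),
            ← ENNReal.ofReal_add (by positivity) (abs_nonneg _),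
            ← ENNReal.ofReal_add (by positivity) (abs_nonneg _)]
          apply ENNReal.ofReal_le_ofReal
          have t1 := abs_sub_le (F ε (G ε x)) (f (G ε x)) (f (g x))
          have t2 := abs_sub_le (f (G ε x)) (h (G ε x)) (f (g x))
          have t3 := abs_sub_le (h (G ε x)) (h (g x)) (f (g x))
          have t4 := abs_sub_comm (h (g x)) (f (g x))
          have t5 := abs_sub_comm (f (g x)) (h (g x))
          linarith [abs_sub_le (F ε (G ε x)) (f (G ε x)) (f (g x))]
      _ = (∫⁻ x in Ioo a b, k1 (G ε x)) + (∫⁻ x in Ioo a b, k2 (G ε x))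
          + (∫⁻ x in Ioo a b, ENNReal.ofReal |h (G ε x) - h (g x)|)
          + (∫⁻ x in Ioo a b, k2 (g x)) := by
          have m1 : Measurable fun x => k1 (G ε x) := hk1m.comp hGm
          have m2 : Measurable fun x => k2 (G ε x) := hk2m.comp hGm
          have m3 : Measurable fun x => ENNReal.ofReal |h (G ε x) - h (g x)| :=
            ((hhcont.measurable.comp hGm).sub (hhcont.measurable.comp hgm)).abs.ennreal_ofReal
          rw [lintegral_add_left (f := fun x => k1 (G ε x) + k2 (G ε x) + ENNReal.ofReal |h (G ε x) - h (g x)|) ((m1.add m2).add m3), lintegral_add_left (f := fun x => k1 (G ε x) + k2 (G ε x)) (m1.add m2),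
            lintegral_add_left m1]
      _ ≤ ENNReal.ofReal (δ' / 4) + ENNReal.ofReal (δ' / 4)
          + ENNReal.ofReal (δ' / 4) + ENNReal.ofReal (δ' / 4) :=
          add_le_add (add_le_add (add_le_add hT1 hT2) hT3) hT4
      _ = ENNReal.ofReal δ' := by
          rw [← ENNReal.ofReal_add (by positivity) (by positivity),
            ← ENNReal.ofReal_add (by positivity) (by positivity),
            ← ENNReal.ofReal_add (by positivity) (by positivity)]
          congr 1; ring
  -- convert back to Bochner integral
  have htr := (ENNReal.tendsto_toReal (by simp : (0:ℝ≥0∞) ≠ ⊤)).comp hL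
  rw [ENNReal.toReal_zero] at htr
  refine Tendsto.congr' ?_ htr
  filter_upwards [self_mem_nhdsWithin] with ε hε
  have hε' : (0:ℝ) < ε := hε
  have hm : AEStronglyMeasurable (fun x => |F ε (G ε x) - f (g x)|)
      (volume.restrict (Ioo a b)) :=
    (((hFmeas ε).comp (hGlip ε hε').continuous.measurable).sub
      (hfmeas.comp hgm)).abs.aestronglyMeasurable
  exact (integral_eq_lintegral_of_nonneg_ae (ae_of_all _ fun x => abs_nonneg _) hm).symm
end

section
/- For f ∈ TV(ℝ) ∩ L^∞(ℝ) and g, h bi-Lipschitz increasing diffeomorphisms of ℝ, ‖f∘g − f∘h‖_{L¹(ℝ)} ≤ |f|_{TV(ℝ)} ‖g^{-1} − h^{-1}‖_{L^∞(ℝ)}. -/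
open MeasureTheory Set Function
open scoped NNReal

/-- For `f ∈ TV(ℝ) ∩ L^∞(ℝ)` and `g, h` bi-Lipschitz increasing
diffeomorphisms of `ℝ`, `‖f∘g − f∘h‖_{L¹(ℝ)} ≤ |f|_{TV(ℝ)} ‖g⁻¹ − h⁻¹‖_{L^∞(ℝ)}`. -/
theorem stmt12
    (f g h : ℝ → ℝ) (Cf : ℝ)
    (hfmeas : Measurable f) (hfbd : ∀ x, |f x| ≤ Cf)
    (hfTV : eVariationOn f univ ≠ ⊤)
    (hgmono : StrictMono g) (hhmono : StrictMono h)
    (hgbij : Bijective g) (hhbij : Bijective h)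
    (hglip : ∃ K : ℝ≥0, LipschitzWith K g) (hhlip : ∃ K : ℝ≥0, LipschitzWith K h)
    (hgilip : ∃ K : ℝ≥0, LipschitzWith K (invFun g))
    (hhilip : ∃ K : ℝ≥0, LipschitzWith K (invFun h))
    (Cd : ℝ) (hCd : ∀ x : ℝ, |invFun g x - invFun h x| ≤ Cd) :
    ∫ x : ℝ, |f (g x) - f (h x)| ≤ (eVariationOn f univ).toReal * Cd := by
  classical
  have hCd0 : 0 ≤ Cd := le_trans (abs_nonneg _) (hCd 0)
  set Vt : ℝ := (eVariationOn f univ).toReal with hVtdef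
  have hVt0 : 0 ≤ Vt := ENNReal.toReal_nonneg
  have hBV : BoundedVariationOn f univ := hfTV
  have hLBV : LocallyBoundedVariationOn f univ := hBV.locallyBoundedVariationOn
  set v : ℝ → ℝ := variationOnFromTo f univ 0 with hvdef
  have hvmono : Monotone v := fun a b hab =>
    variationOnFromTo.monotoneOn hLBV (mem_univ 0) (mem_univ a) (mem_univ b) hab
  have hv0 : v 0 = 0 := variationOnFromTo.self f univ 0
  have hvdiff : ∀ a b : ℝ, a ≤ b → v b - v a = (eVariationOn f (univ ∩ Icc a b)).toReal := by
    intro a b hab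
    have hadd := variationOnFromTo.add hLBV (mem_univ 0) (mem_univ a) (mem_univ b)
    rw [variationOnFromTo.eq_of_le f univ hab] at hadd
    linarith [hadd]
  have hdiff_le : ∀ a b : ℝ, v b - v a ≤ Vt := by
    intro a b
    rcases le_total a b with hab | hba
    · rw [hvdiff a b hab]
      exact ENNReal.toReal_mono hfTV (eVariationOn.mono f inter_subset_left)
    · have := hvmono hba; linarith
  have hkey : ∀ a b : ℝ, |f a - f b| ≤ |v a - v b| := by
    have base : ∀ a b : ℝ, b ≤ a → |f a - f b| ≤ |v a - v b| := by
      intro a b hab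
      have h1 : dist (f a) (f b) ≤ (eVariationOn f (univ ∩ Icc b a)).toReal :=
        (hBV.mono inter_subset_left).dist_le ⟨mem_univ a, hab, le_refl a⟩
          ⟨mem_univ b, le_refl b, hab⟩
      rw [Real.dist_eq, ← hvdiff b a hab] at h1
      exact h1.trans (le_abs_self _)
    intro a b
    rcases le_total b a with hab | hba
    · exact base a b hab
    · rw [abs_sub_comm, abs_sub_comm (v a)]; exact base b a hba
  have hvabs : ∀ x, -Vt ≤ v x ∧ v x ≤ Vt := by
    intro x
    constructor
    · have := hdiff_le x 0; rw [hv0] at this; linarith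
    · have := hdiff_le 0 x; rw [hv0] at this; linarith
  set M : ℝ := sSup (range v) with hMdef
  set m : ℝ := sInf (range v) with hmdef
  have hne : (range v).Nonempty := ⟨v 0, mem_range_self 0⟩
  have hbdd : BddAbove (range v) := ⟨Vt, by rintro _ ⟨x, rfl⟩; exact (hvabs x).2⟩
  have hbddb : BddBelow (range v) := ⟨-Vt, by rintro _ ⟨x, rfl⟩; exact (hvabs x).1⟩
  have hmle : ∀ x, m ≤ v x := fun x => csInf_le hbddb (mem_range_self x)
  have hleM : ∀ x, v x ≤ M := fun x => le_csSup hbdd (mem_range_self x)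
  have hmM : M - m ≤ Vt := by
    have h1 : M ≤ m + Vt := by
      apply csSup_le hne
      rintro _ ⟨b, rfl⟩
      have h2 : v b - Vt ≤ m := by
        apply le_csInf hne
        rintro _ ⟨a, rfl⟩
        have := hdiff_le a b; linarith
      linarith
    linarith
  obtain ⟨Kg, hKg⟩ := hglip
  obtain ⟨Kh, hKh⟩ := hhlip
  have hgmeas : Measurable g := hKg.continuous.measurable
  have hhmeas : Measurable h := hKh.continuous.measurable
  set W : ℝ → ℝ := fun x => v (g x) with hWdef
  set V : ℝ → ℝ := fun x => v (h x) with hVdef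
  have hWmono : Monotone W := fun a b hab => hvmono (hgmono.monotone hab)
  have hVmono : Monotone V := fun a b hab => hvmono (hhmono.monotone hab)
  have hWmeas : Measurable W := hWmono.measurable
  have hVmeas : Measurable V := hVmono.measurable
  set T : Set (ℝ × ℝ) := {p | Xor' (p.2 ≤ W p.1) (p.2 ≤ V p.1)} with hTdef
  have hT : MeasurableSet T := by
    have h1 : MeasurableSet {p : ℝ × ℝ | p.2 ≤ W p.1} :=
      measurableSet_le measurable_snd (hWmeas.comp measurable_fst)
    have h2 : MeasurableSet {p : ℝ × ℝ | p.2 ≤ V p.1} :=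
      measurableSet_le measurable_snd (hVmeas.comp measurable_fst)
    have hTeq : T = ({p : ℝ × ℝ | p.2 ≤ W p.1} \ {p | p.2 ≤ V p.1}) ∪
        ({p : ℝ × ℝ | p.2 ≤ V p.1} \ {p | p.2 ≤ W p.1}) := by
      ext p
      simp only [hTdef, mem_setOf_eq, Xor', Xor, mem_union, mem_diff, mem_setOf_eq]
    rw [hTeq]
    exact (h1.diff h2).union (h2.diff h1)
  have hslice : ∀ x : ℝ, Ioc (min (W x) (V x)) (max (W x) (V x)) = {t | (x, t) ∈ T} := by
    intro x; ext t
    simp only [mem_Ioc, mem_setOf_eq, hTdef, Xor']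
    rcases le_total (W x) (V x) with hc | hc
    · rw [min_eq_left hc, max_eq_right hc]
      constructor
      · rintro ⟨h1, h2⟩; exact Or.inr ⟨h2, not_le.2 h1⟩
      · rintro (⟨h1, h2⟩ | ⟨h1, h2⟩)
        · exact absurd (h1.trans hc) h2
        · exact ⟨not_le.1 h2, h1⟩
    · rw [min_eq_right hc, max_eq_left hc]
      constructor
      · rintro ⟨h1, h2⟩; exact Or.inl ⟨h2, not_le.2 h1⟩
      · rintro (⟨h1, h2⟩ | ⟨h1, h2⟩)
        · exact ⟨not_le.1 h2, h1⟩
        · exact absurd (h1.trans hc) h2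
  have hmain : ∫⁻ x : ℝ, ENNReal.ofReal |f (g x) - f (h x)| ≤ ENNReal.ofReal (Vt * Cd) := by
    have step1 : ∫⁻ x : ℝ, ENNReal.ofReal |f (g x) - f (h x)| ≤
        ∫⁻ x : ℝ, ENNReal.ofReal |W x - V x| :=
      lintegral_mono fun x => ENNReal.ofReal_le_ofReal (hkey (g x) (h x))
    have step2 : ∀ x : ℝ, ENNReal.ofReal |W x - V x| =
        ∫⁻ t : ℝ, T.indicator 1 (x, t) := by
      intro x
      have hms : MeasurableSet {t : ℝ | (x, t) ∈ T} :=
        hT.preimage measurable_prodMk_left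
      have heqf : (fun t : ℝ => T.indicator 1 (x, t)) =
          ({t : ℝ | (x, t) ∈ T}).indicator (1 : ℝ → ENNReal) := by
        ext t
        by_cases hmem : (x, t) ∈ T <;> simp [Set.indicator_apply, hmem]
      rw [heqf, lintegral_indicator_one hms, ← hslice x, Real.volume_Ioc,
        max_sub_min_eq_abs, abs_sub_comm]
    have step3 : ∫⁻ x : ℝ, ∫⁻ t : ℝ, T.indicator 1 (x, t) =
        ∫⁻ t : ℝ, ∫⁻ x : ℝ, T.indicator 1 (x, t) := by
      apply lintegral_lintegral_swap
      exact (measurable_one.indicator hT).aemeasurable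
    have step4 : ∀ t : ℝ, ∫⁻ x : ℝ, T.indicator 1 (x, t) = volume {x : ℝ | (x, t) ∈ T} := by
      intro t
      have hms : MeasurableSet {x : ℝ | (x, t) ∈ T} :=
        hT.preimage measurable_prodMk_right
      have heqf : (fun x : ℝ => T.indicator 1 (x, t)) =
          ({x : ℝ | (x, t) ∈ T}).indicator (1 : ℝ → ENNReal) := by
        ext x
        by_cases hmem : (x, t) ∈ T <;> simp [Set.indicator_apply, hmem]
      rw [heqf, lintegral_indicator_one hms]
    have step5 : ∀ t : ℝ, volume {x : ℝ | (x, t) ∈ T} ≤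
        (Ioc m M).indicator (fun _ => ENNReal.ofReal Cd) t := by
      intro t
      by_cases ht : t ∈ Ioc m M
      · rw [indicator_of_mem ht]
        set U : Set ℝ := {y | t ≤ v y} with hUdef
        by_cases hUne : U.Nonempty
        · obtain ⟨z, hz⟩ : ∃ z, v z < t := by
            by_contra hcon
            push_neg at hcon
            have : t ≤ m := le_csInf hne (by rintro _ ⟨a, rfl⟩; exact hcon a)
            exact absurd ht.1 (not_lt.2 this)
          have hUbdd : BddBelow U := by
            refine ⟨z, fun y hy => ?_⟩
            by_contra hyz
            push_neg at hyz
            exact absurd (hvmono hyz.le) (not_le.2 (lt_of_lt_of_le hz hy))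
          set u : ℝ := sInf U with hudef
          have hUsub : ∀ y ∈ U, u ≤ y := fun y hy => csInf_le hUbdd hy
          have hIoiU : ∀ y : ℝ, u < y → y ∈ U := by
            intro y hy
            obtain ⟨w, hwU, hwy⟩ := exists_lt_of_csInf_lt hUne hy
            exact le_trans hwU (hvmono hwy.le)
          set a' : ℝ := invFun g u with hadef
          set b' : ℝ := invFun h u with hbdef
          have hga : g a' = u := invFun_eq (hgbij.surjective u)
          have hhb : h b' = u := invFun_eq (hhbij.surjective u)
          have hsub : {x : ℝ | (x, t) ∈ T} ⊆ Icc (min a' b') (max a' b') := by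
            intro x hx
            simp only [mem_setOf_eq, hTdef, Xor'] at hx
            rcases hx with ⟨h1, h2⟩ | ⟨h1, h2⟩
            · have hxa : a' ≤ x := by
                have hgu : g a' ≤ g x := by rw [hga]; exact hUsub _ h1
                exact hgmono.le_iff_le.1 hgu
              have hxb : x ≤ b' := by
                by_contra hxb
                push_neg at hxb
                have hlt : u < h x := by rw [← hhb]; exact hhmono hxb
                exact h2 (hIoiU _ hlt)
              exact ⟨le_trans (min_le_left _ _) hxa, le_trans hxb (le_max_right _ _)⟩
            · have hxb : b' ≤ x := by
                have hhu : h b' ≤ h x := by rw [hhb]; exact hUsub _ h1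
                exact hhmono.le_iff_le.1 hhu
              have hxa : x ≤ a' := by
                by_contra hxa
                push_neg at hxa
                have hlt : u < g x := by rw [← hga]; exact hgmono hxa
                exact h2 (hIoiU _ hlt)
              exact ⟨le_trans (min_le_right _ _) hxb, le_trans hxa (le_max_left _ _)⟩
          calc volume {x : ℝ | (x, t) ∈ T}
              ≤ volume (Icc (min a' b') (max a' b')) := measure_mono hsub
            _ = ENNReal.ofReal (max a' b' - min a' b') := Real.volume_Icc
            _ ≤ ENNReal.ofReal Cd := by
                rw [max_sub_min_eq_abs, abs_sub_comm]
                exact ENNReal.ofReal_le_ofReal (hCd u)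
        · have hempty : {x : ℝ | (x, t) ∈ T} = ∅ := by
            ext x
            simp only [mem_empty_iff_false, iff_false, mem_setOf_eq, hTdef, Xor']
            rintro (⟨h1, _⟩ | ⟨h1, _⟩)
            · exact hUne ⟨g x, h1⟩
            · exact hUne ⟨h x, h1⟩
          rw [hempty]
          simp
      · rw [indicator_of_notMem ht]
        have hempty : {x : ℝ | (x, t) ∈ T} = ∅ := by
          ext x
          simp only [mem_empty_iff_false, iff_false, mem_setOf_eq, hTdef, Xor']
          rw [mem_Ioc, not_and_or, not_lt, not_le] at ht
          rcases ht with htm | htM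
          · have h1 : t ≤ W x := le_trans htm (hmle (g x))
            have h2 : t ≤ V x := le_trans htm (hmle (h x))
            rintro (⟨_, hh⟩ | ⟨_, hh⟩)
            · exact hh h2
            · exact hh h1
          · have h1 : ¬ t ≤ W x := not_le.2 (lt_of_le_of_lt (hleM (g x)) htM)
            have h2 : ¬ t ≤ V x := not_le.2 (lt_of_le_of_lt (hleM (h x)) htM)
            rintro (⟨hh, _⟩ | ⟨hh, _⟩)
            · exact h1 hh
            · exact h2 hh
        rw [hempty]
        simp
    calc ∫⁻ x : ℝ, ENNReal.ofReal |f (g x) - f (h x)|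
        ≤ ∫⁻ x : ℝ, ENNReal.ofReal |W x - V x| := step1
      _ = ∫⁻ x : ℝ, ∫⁻ t : ℝ, T.indicator 1 (x, t) := lintegral_congr step2
      _ = ∫⁻ t : ℝ, ∫⁻ x : ℝ, T.indicator 1 (x, t) := step3
      _ = ∫⁻ t : ℝ, volume {x : ℝ | (x, t) ∈ T} := lintegral_congr step4
      _ ≤ ∫⁻ t : ℝ, (Ioc m M).indicator (fun _ => ENNReal.ofReal Cd) t :=
          lintegral_mono step5
      _ = ENNReal.ofReal Cd * volume (Ioc m M) :=
          lintegral_indicator_const measurableSet_Ioc _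
      _ = ENNReal.ofReal Cd * ENNReal.ofReal (M - m) := by rw [Real.volume_Ioc]
      _ ≤ ENNReal.ofReal Cd * ENNReal.ofReal Vt :=
          mul_le_mul_right (ENNReal.ofReal_le_ofReal hmM) _
      _ = ENNReal.ofReal (Cd * Vt) := (ENNReal.ofReal_mul hCd0).symm
      _ = ENNReal.ofReal (Vt * Cd) := by rw [mul_comm]
  have hGmeas : Measurable fun x : ℝ => |f (g x) - f (h x)| :=
    ((hfmeas.comp hgmeas).sub (hfmeas.comp hhmeas)).abs
  rw [integral_eq_lintegral_of_nonneg_ae (Filter.Eventually.of_forall fun x => abs_nonneg _)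
    hGmeas.aestronglyMeasurable]
  calc (∫⁻ x : ℝ, ENNReal.ofReal |f (g x) - f (h x)|).toReal
      ≤ (ENNReal.ofReal (Vt * Cd)).toReal :=
        ENNReal.toReal_mono ENNReal.ofReal_ne_top hmain
    _ = Vt * Cd := ENNReal.toReal_ofReal (mul_nonneg hVt0 hCd0)
end
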